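/- Let q be a prime, let (b₁, b₂, b₃, b₄) ∈ (ZMod q)⁴ and h ∈ ZMod q. Then Σ_{r ∈ ZMod q} Σ_{s ∈ ZMod q} Kl(s(r+b₁);q) · Kl(s(r+b₂);q) · conj(Kl(s(r+b₃);q) · Kl(s(r+b₄);q)) · e_q(h·s) = q^(−1) · Σ₁ + S, where Σ₁ = Σ e_q(u⁻¹ + v⁻¹ − u'⁻¹ − v'⁻¹), summed over all quadruples (u,v,u',v') ∈ ((ZMod q)ˣ)⁴ with u + v ≠ u' + v', and S = Σ e_q(u⁻¹ + v⁻¹ − u'⁻¹ − v'⁻¹), summed over all quadruples (u,v,u',v') ∈ ((ZMod q)ˣ)⁴ satisfying both u + v = u' + v' and b₁u + b₂v − b₃u' − b₄v' + h = 0. -/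

import Mathlib

open scoped BigOperators

/-- The additive character `e_q(x) = e(x̃/q)` on `ZMod q`. -/
noncomputable def eChar (q : ℕ) (x : ZMod q) : ℂ :=
  Complex.exp (2 * (Real.pi : ℂ) * Complex.I * (x.val : ℂ) / (q : ℂ))

/-- The normalized Kloosterman sum `Kl(x;q) = q^{-1/2} ∑_{d ∈ (ZMod q)ˣ} e_q(x d + d⁻¹)`. -/
noncomputable def Kl (q : ℕ) [NeZero q] (x : ZMod q) : ℂ :=
  ((Real.sqrt q)⁻¹ : ℝ) *
    ∑ d : (ZMod q)ˣ, eChar q (x * (d : ZMod q) + ((d⁻¹ : (ZMod q)ˣ) : ZMod q))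

/-- `ℓ¹`-norm of a (finitely supported) sequence of complex numbers. -/
noncomputable def l1norm {ι : Type*} (f : ι → ℂ) : ℝ := ∑' i, ‖f i‖

/-- `ℓ²`-norm of a (finitely supported) sequence of complex numbers. -/
noncomputable def l2norm {ι : Type*} (f : ι → ℂ) : ℝ := Real.sqrt (∑' i, ‖f i‖ ^ 2)

variable (q : ℕ) [Fact (Nat.Prime q)]

lemma eChar_eq (x : ZMod q) : eChar q x = ZMod.stdAddChar x := by
  rw [ZMod.stdAddChar_apply, ZMod.toCircle_apply, eChar]

lemma eChar_add (x y : ZMod q) : eChar q (x + y) = eChar q x * eChar q y := by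
  simp only [eChar_eq, AddChar.map_add_eq_mul]

lemma eChar_zero : eChar q 0 = 1 := by simp [eChar_eq]

lemma conj_eChar (x : ZMod q) : (starRingEnd ℂ) (eChar q x) = eChar q (-x) := by
  have h1 : eChar q (-x) * eChar q x = 1 := by
    rw [← eChar_add]; simp [eChar_zero]
  have h2 : (starRingEnd ℂ) (eChar q x) * eChar q x = 1 := by
    rw [eChar, ← Complex.exp_conj, ← Complex.exp_add, ← Complex.exp_zero]
    congr 1
    have : ((x.val : ℂ)) = ((x.val : ℝ) : ℂ) := by push_cast; ring
    simp only [map_div₀, map_mul, Complex.conj_I, Complex.conj_ofNat, Complex.conj_ofReal, this,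
      map_natCast]
    ring
  have hne : eChar q x ≠ 0 := by
    intro h; rw [h, mul_zero] at h2; exact one_ne_zero h2.symm
  exact mul_right_cancel₀ hne (h2.trans h1.symm)

lemma sum_eChar (A : ZMod q) : ∑ s : ZMod q, eChar q (s * A) = if A = 0 then (q : ℂ) else 0 := by
  classical
  simp only [eChar_eq]
  rw [AddChar.sum_mulShift A (ZMod.isPrimitive_stdAddChar q)]
  simp [ZMod.card]

lemma swap3 {α β γ : Type*} [Fintype α] [Fintype β] [Fintype γ] (f : α → β → γ → ℂ) :
    ∑ r : α, ∑ s : β, ∑ u : γ, f r s u = ∑ u : γ, ∑ r : α, ∑ s : β, f r s u := by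
  have h1 : ∀ r : α, ∑ s : β, ∑ u : γ, f r s u = ∑ u : γ, ∑ s : β, f r s u := fun r =>
    Finset.sum_comm
  simp_rw [h1]
  exact Finset.sum_comm

lemma swap6 {α β γ δ ε ζ : Type*} [Fintype α] [Fintype β] [Fintype γ] [Fintype δ] [Fintype ε]
    [Fintype ζ] (f : α → β → γ → δ → ε → ζ → ℂ) :
    ∑ r : α, ∑ s : β, ∑ u : γ, ∑ v : δ, ∑ u' : ε, ∑ v' : ζ, f r s u v u' v'
      = ∑ u : γ, ∑ v : δ, ∑ u' : ε, ∑ v' : ζ, ∑ r : α, ∑ s : β, f r s u v u' v' := by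
  rw [swap3]
  have h1 : ∀ u : γ, ∑ r : α, ∑ s : β, ∑ v : δ, ∑ u' : ε, ∑ v' : ζ, f r s u v u' v'
      = ∑ v : δ, ∑ r : α, ∑ s : β, ∑ u' : ε, ∑ v' : ζ, f r s u v u' v' := fun u => swap3 _
  simp_rw [h1]
  have h2 : ∀ (u : γ) (v : δ), ∑ r : α, ∑ s : β, ∑ u' : ε, ∑ v' : ζ, f r s u v u' v'
      = ∑ u' : ε, ∑ r : α, ∑ s : β, ∑ v' : ζ, f r s u v u' v' := fun u v => swap3 _
  simp_rw [h2]
  have h3 : ∀ (u : γ) (v : δ) (u' : ε), ∑ r : α, ∑ s : β, ∑ v' : ζ, f r s u v u' v'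
      = ∑ v' : ζ, ∑ r : α, ∑ s : β, f r s u v u' v' := fun u v u' => swap3 _
  simp_rw [h3]

lemma inner_eval (C B D : ZMod q) :
    ∑ r : ZMod q, ∑ s : ZMod q, eChar q (D + s * (r * C + B)) =
      eChar q D * (if C ≠ 0 then (q : ℂ) else if B = 0 then (q : ℂ) ^ 2 else 0) := by
  classical
  simp_rw [eChar_add, ← Finset.mul_sum, sum_eChar]
  congr 1
  by_cases hC : C = 0
  · subst hC
    simp only [mul_zero, zero_add, ne_eq, not_true_eq_false, if_false]
    by_cases hB : B = 0 <;>
      simp [hB, ZMod.card, sq, Finset.sum_const, Finset.card_univ, mul_comm]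
  · simp only [ne_eq, hC, not_false_eq_true, if_true]
    have hiff : ∀ r : ZMod q, (r * C + B = 0) ↔ r = -B * C⁻¹ := by
      intro r
      rw [eq_mul_inv_iff_mul_eq₀ hC, add_eq_zero_iff_eq_neg]
    simp only [hiff]
    rw [Finset.sum_ite_eq' Finset.univ (-B * C⁻¹) fun _ => (q : ℂ)]
    simp

lemma s12 {ι : Type*} [Fintype ι] (F : ι → ι → ι → ι → ℂ) :
    ∑ a, ∑ b, ∑ c, ∑ d, F a b c d = ∑ b, ∑ a, ∑ c, ∑ d, F a b c d := Finset.sum_comm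

lemma s23 {ι : Type*} [Fintype ι] (F : ι → ι → ι → ι → ℂ) :
    ∑ a, ∑ b, ∑ c, ∑ d, F a b c d = ∑ a, ∑ c, ∑ b, ∑ d, F a b c d :=
  Finset.sum_congr rfl fun _ _ => Finset.sum_comm

lemma s34 {ι : Type*} [Fintype ι] (F : ι → ι → ι → ι → ℂ) :
    ∑ a, ∑ b, ∑ c, ∑ d, F a b c d = ∑ a, ∑ b, ∑ d, ∑ c, F a b c d :=
  Finset.sum_congr rfl fun _ _ => Finset.sum_congr rfl fun _ _ => Finset.sum_comm

lemma rev4 {ι : Type*} [Fintype ι] (F : ι → ι → ι → ι → ℂ) :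
    ∑ a, ∑ b, ∑ c, ∑ d, F a b c d = ∑ d, ∑ c, ∑ b, ∑ a, F a b c d := by
  rw [s34, s23, s12, s34, s23, s34]

/-- Decomposition of the complete sum `Σ(K,b,h)` of products of four Kloosterman sums into the
contribution `q⁻¹ Σ₁` of quadruples with `u+v ≠ u'+v'` and the two-variable character sum `S`
over quadruples with `u+v = u'+v'` and `b₁u + b₂v - b₃u' - b₄v' + h = 0`. -/
theorem complete_sum_splits (q : ℕ) [Fact (Nat.Prime q)] (b₁ b₂ b₃ b₄ h : ZMod q) :
    (∑ r : ZMod q, ∑ s : ZMod q,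
        Kl q (s * (r + b₁)) * Kl q (s * (r + b₂)) *
          (starRingEnd ℂ) (Kl q (s * (r + b₃)) * Kl q (s * (r + b₄))) *
          eChar q (h * s)) =
      (q : ℂ)⁻¹ *
        (∑ u : (ZMod q)ˣ, ∑ v : (ZMod q)ˣ, ∑ u' : (ZMod q)ˣ, ∑ v' : (ZMod q)ˣ,
          if (u : ZMod q) + (v : ZMod q) ≠ (u' : ZMod q) + (v' : ZMod q) then
            eChar q ((u : ZMod q)⁻¹ + (v : ZMod q)⁻¹ - (u' : ZMod q)⁻¹ - (v' : ZMod q)⁻¹)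
          else 0) +
      (∑ u : (ZMod q)ˣ, ∑ v : (ZMod q)ˣ, ∑ u' : (ZMod q)ˣ, ∑ v' : (ZMod q)ˣ,
          if (u : ZMod q) + (v : ZMod q) = (u' : ZMod q) + (v' : ZMod q) ∧
              b₁ * (u : ZMod q) + b₂ * (v : ZMod q) - b₃ * (u' : ZMod q) - b₄ * (v' : ZMod q)
                + h = 0 then
            eChar q ((u : ZMod q)⁻¹ + (v : ZMod q)⁻¹ - (u' : ZMod q)⁻¹ - (v' : ZMod q)⁻¹)
          else 0) := by
  classical
  have hq0 : (q : ℂ) ≠ 0 := Nat.cast_ne_zero.mpr (Fact.out (p := Nat.Prime q)).pos.ne'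
  have hqR : (0 : ℝ) ≤ (q : ℝ) := Nat.cast_nonneg q
  set c : ℂ := (((Real.sqrt q)⁻¹ : ℝ) : ℂ) with hc
  have hc4 : c ^ 4 = ((q : ℂ) ^ 2)⁻¹ := by
    have hr : ((Real.sqrt q)⁻¹) ^ 4 = (((q : ℝ)) ^ 2)⁻¹ := by
      rw [inv_pow]
      congr 1
      rw [show (4 : ℕ) = 2 * 2 from rfl, pow_mul, Real.sq_sqrt hqR]
    rw [hc, ← Complex.ofReal_pow, hr]
    push_cast
    ring
  have expand : ∀ r s : ZMod q,
      Kl q (s * (r + b₁)) * Kl q (s * (r + b₂)) *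
          (starRingEnd ℂ) (Kl q (s * (r + b₃)) * Kl q (s * (r + b₄))) * eChar q (h * s)
      = c ^ 4 * ∑ u : (ZMod q)ˣ, ∑ v : (ZMod q)ˣ, ∑ u' : (ZMod q)ˣ, ∑ v' : (ZMod q)ˣ,
          eChar q (((u : ZMod q)⁻¹ + (v : ZMod q)⁻¹ - (u' : ZMod q)⁻¹ - (v' : ZMod q)⁻¹)
            + s * (r * ((u : ZMod q) + (v : ZMod q) - (u' : ZMod q) - (v' : ZMod q))
              + (b₁ * (u : ZMod q) + b₂ * (v : ZMod q) - b₃ * (u' : ZMod q) - b₄ * (v' : ZMod q)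
                  + h))) := by
    intro r s
    have hconj : ∀ x : ZMod q, (starRingEnd ℂ) (Kl q x)
        = c * ∑ d : (ZMod q)ˣ, eChar q (-(x * (d : ZMod q) + ((d⁻¹ : (ZMod q)ˣ) : ZMod q))) := by
      intro x
      simp only [Kl, map_mul, map_sum, conj_eChar, Complex.conj_ofReal, hc]
    have rearr : ∀ A B C D E : ℂ,
        (c * A) * (c * B) * ((c * C) * (c * D)) * E = c ^ 4 * (A * B * C * D * E) := by
      intros; ring
    rw [map_mul, hconj, hconj, Kl, Kl, ← hc, rearr]
    congr 1
    simp only [Finset.sum_mul, Finset.mul_sum]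
    rw [rev4]
    refine Finset.sum_congr rfl fun u _ => Finset.sum_congr rfl fun v _ =>
      Finset.sum_congr rfl fun u' _ => Finset.sum_congr rfl fun v' _ => ?_
    simp only [← eChar_add]
    congr 1
    simp only [← ZMod.inv_coe_unit]
    ring
  have step1 : (∑ r : ZMod q, ∑ s : ZMod q,
      Kl q (s * (r + b₁)) * Kl q (s * (r + b₂)) *
        (starRingEnd ℂ) (Kl q (s * (r + b₃)) * Kl q (s * (r + b₄))) * eChar q (h * s))
      = c ^ 4 * ∑ u : (ZMod q)ˣ, ∑ v : (ZMod q)ˣ, ∑ u' : (ZMod q)ˣ, ∑ v' : (ZMod q)ˣ,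
          ∑ r : ZMod q, ∑ s : ZMod q,
          eChar q (((u : ZMod q)⁻¹ + (v : ZMod q)⁻¹ - (u' : ZMod q)⁻¹ - (v' : ZMod q)⁻¹)
            + s * (r * ((u : ZMod q) + (v : ZMod q) - (u' : ZMod q) - (v' : ZMod q))
              + (b₁ * (u : ZMod q) + b₂ * (v : ZMod q) - b₃ * (u' : ZMod q) - b₄ * (v' : ZMod q)
                  + h))) := by
    simp_rw [expand, ← Finset.mul_sum]
    rw [swap6]
  rw [step1]
  simp_rw [inner_eval]
  simp only [Finset.mul_sum, ← Finset.sum_add_distrib]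
  refine Finset.sum_congr rfl fun u _ => Finset.sum_congr rfl fun v _ =>
    Finset.sum_congr rfl fun u' _ => Finset.sum_congr rfl fun v' _ => ?_
  by_cases hC : (u : ZMod q) + (v : ZMod q) = (u' : ZMod q) + (v' : ZMod q)
  · have hC0 : (u : ZMod q) + (v : ZMod q) - (u' : ZMod q) - (v' : ZMod q) = 0 := by
      rw [hC]; ring
    by_cases hB : b₁ * (u : ZMod q) + b₂ * (v : ZMod q) - b₃ * (u' : ZMod q)
        - b₄ * (v' : ZMod q) + h = 0
    · simp only [hC0, ne_eq, not_true_eq_false, if_false, hB, if_true, hC, and_self,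
        not_false_eq_true, mul_zero]
      rw [hc4]
      field_simp
      rw [if_neg (by simp)]; ring
    · rw [hC0, if_neg (by simp), if_neg hB, if_neg (not_not_intro hC),
        if_neg fun hx => hB hx.2]
      ring
  · have hC0 : (u : ZMod q) + (v : ZMod q) - (u' : ZMod q) - (v' : ZMod q) ≠ 0 := by
      intro hx; exact hC (by linear_combination hx)
    simp only [ne_eq, hC0, not_false_eq_true, if_true, hC, false_and, if_false, mul_zero,
      add_zero]
    rw [hc4]
    field_simp
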